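/- (Optimal rank-r update: value of the minimum.) Let M ∈ ℝ^{p×w}, let C ∈ ℝ^{m×w} have full row rank m (so W := C Cᵀ is positive definite), and let r ≤ m. Let N := W^{-1/2} C Mᵀ M Cᵀ W^{-1/2}, where W^{-1/2} is the inverse of the positive-definite square root of W, and let λ₁ ≥ λ₂ ≥ … ≥ λ_m ≥ 0 be the eigenvalues of the symmetric positive-semidefinite matrix N in decreasing order. Then the infimum over all a ∈ ℝ^{p×r} and b ∈ ℝ^{m×r} of ‖M + a bᵀ C‖_F² equals ‖M‖_F² − (λ₁ + … + λ_r), and this infimum is attained. -/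

import Mathlib

open Matrix
open scoped RealInnerProductSpace

/-- The Euclidean (2-) norm of a real vector. -/
noncomputable def enorm {ι : Type*} [Fintype ι] (v : ι → ℝ) : ℝ :=
  Real.sqrt (∑ i, (v i) ^ 2)

/-- The squared Frobenius norm of a real matrix. -/
noncomputable def frobSq {ι κ : Type*} [Fintype ι] [Fintype κ] (M : Matrix ι κ ℝ) : ℝ :=
  ∑ i, ∑ j, (M i j) ^ 2

/-- The Frobenius norm of a real matrix. -/
noncomputable def frobNorm {ι κ : Type*} [Fintype ι] [Fintype κ] (M : Matrix ι κ ℝ) : ℝ :=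
  Real.sqrt (frobSq M)

/-- The spectral (operator 2-) norm of a real matrix. -/
noncomputable def specNorm {ι κ : Type*} [Fintype ι] [Fintype κ] [DecidableEq κ]
    (M : Matrix ι κ ℝ) : ℝ :=
  ‖LinearMap.toContinuousLinearMap (Matrix.toEuclideanLin M)‖

/-- Matrix-vector multiplication as a map between Euclidean spaces. -/
noncomputable def mulVecE {ι κ : Type*} [Fintype ι] [Fintype κ] [DecidableEq κ]
    (M : Matrix ι κ ℝ) (v : EuclideanSpace ℝ κ) : EuclideanSpace ℝ ι :=
  Matrix.toEuclideanLin M v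

/-- A matrix as a continuous linear map between Euclidean spaces. -/
noncomputable def toCLM {ι κ : Type*} [Fintype ι] [Fintype κ] [DecidableEq κ]
    (M : Matrix ι κ ℝ) : EuclideanSpace ℝ κ →L[ℝ] EuclideanSpace ℝ ι :=
  LinearMap.toContinuousLinearMap (Matrix.toEuclideanLin M)

/-- The canonical Poisson (symplectic) matrix `J = [[0, I], [-I, 0]]` of size `2n × 2n`. -/
noncomputable def Jmat (n : ℕ) : Matrix (Fin n ⊕ Fin n) (Fin n ⊕ Fin n) ℝ :=
  Matrix.fromBlocks 0 1 (-1) 0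

/-- A column selection matrix: its columns are distinct standard basis vectors. -/
def IsSelection {a b : ℕ} (P : Matrix (Fin a) (Fin b) ℝ) : Prop :=
  ∃ β : Fin b → Fin a, Function.Injective β ∧ ∀ i j, P i j = if i = β j then 1 else 0

/-- The positive semidefinite square root of a positive semidefinite matrix (the definition
`Matrix.PosSemidef.sqrt` of the older Mathlib, which has since been removed). -/
noncomputable def psdSqrt {n : Type*} [Fintype n] [DecidableEq n]
    {A : Matrix n n ℝ} (hA : A.PosSemidef) : Matrix n n ℝ :=
  hA.1.eigenvectorUnitary.1 * diagonal ((↑) ∘ Real.sqrt ∘ hA.1.eigenvalues) *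
    (star hA.1.eigenvectorUnitary : Matrix n n ℝ)

lemma psdSqrt_mul_self' {n : Type*} [Fintype n] [DecidableEq n]
    {A : Matrix n n ℝ} (hA : A.PosSemidef) : psdSqrt hA * psdSqrt hA = A := by
  have hU := (Matrix.mem_unitaryGroup_iff').mp hA.1.eigenvectorUnitary.2
  have hspec := hA.1.spectral_theorem
  rw [Unitary.conjStarAlgAut_apply] at hspec
  unfold psdSqrt
  conv_rhs => rw [hspec]
  calc _ = (hA.1.eigenvectorUnitary.1 : Matrix n n ℝ) *
        (diagonal ((↑) ∘ Real.sqrt ∘ hA.1.eigenvalues) *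
          (star (hA.1.eigenvectorUnitary.1 : Matrix n n ℝ) * hA.1.eigenvectorUnitary.1) *
          diagonal ((↑) ∘ Real.sqrt ∘ hA.1.eigenvalues)) *
        star (hA.1.eigenvectorUnitary.1 : Matrix n n ℝ) := by simp only [Matrix.mul_assoc]
    _ = _ := by
      rw [hU, Matrix.mul_one, diagonal_mul_diagonal]
      have hd : (fun i => ((↑) ∘ Real.sqrt ∘ hA.1.eigenvalues : n → ℝ) i *
          ((↑) ∘ Real.sqrt ∘ hA.1.eigenvalues : n → ℝ) i) = RCLike.ofReal ∘ hA.1.eigenvalues := by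
        funext i
        simp [Real.mul_self_sqrt (hA.eigenvalues_nonneg i)]
      rw [hd]

lemma psdSqrt_transpose' {n : Type*} [Fintype n] [DecidableEq n]
    {A : Matrix n n ℝ} (hA : A.PosSemidef) : (psdSqrt hA)ᵀ = psdSqrt hA := by
  unfold psdSqrt
  simp [Matrix.transpose_mul, Matrix.star_eq_conjTranspose, Matrix.mul_assoc]

/- ------------------------------------------------------------------ -/
/- Auxiliary lemmas for statement 12.                                  -/
/- ------------------------------------------------------------------ -/

lemma frobSq_eq_trace' {ι κ : Type*} [Fintype ι] [Fintype κ] (A : Matrix ι κ ℝ) :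
    frobSq A = Matrix.trace (Aᵀ * A) := by
  simp only [frobSq, Matrix.trace, Matrix.diag, Matrix.mul_apply, Matrix.transpose_apply, sq]
  exact Finset.sum_comm

lemma frobSq_nonneg' {ι κ : Type*} [Fintype ι] [Fintype κ] (A : Matrix ι κ ℝ) : 0 ≤ frobSq A := by
  apply Finset.sum_nonneg; intro i _; apply Finset.sum_nonneg; intro j _; positivity

lemma frobSq_add' {ι κ : Type*} [Fintype ι] [Fintype κ] (A B : Matrix ι κ ℝ) :
    frobSq (A + B) = frobSq A + 2 * Matrix.trace (Aᵀ * B) + frobSq B := by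
  simp only [frobSq_eq_trace', Matrix.transpose_add, Matrix.add_mul, Matrix.mul_add,
    Matrix.trace_add]
  have h : Matrix.trace (Bᵀ * A) = Matrix.trace (Aᵀ * B) := by
    rw [← Matrix.trace_transpose (Bᵀ * A), Matrix.transpose_mul, Matrix.transpose_transpose]
  rw [h]; ring

lemma frobSq_split' {ι κ : Type*} [Fintype ι] [Fintype κ] [DecidableEq κ]
    (A : Matrix ι κ ℝ) (Q : Matrix κ κ ℝ) (hs : Qᵀ = Q) (hi : Q * Q = Q) :
    frobSq A = frobSq (A * (1 - Q)) + frobSq (A * Q) := by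
  have hA : A = A * (1 - Q) + A * Q := by
    rw [Matrix.mul_sub, Matrix.mul_one, sub_add_cancel]
  conv_lhs => rw [hA]
  rw [frobSq_add']
  have hcross : Matrix.trace ((A * (1 - Q))ᵀ * (A * Q)) = 0 := by
    rw [show (A * (1 - Q))ᵀ * (A * Q) = (1 - Q)ᵀ * (Aᵀ * A * Q) by
      simp only [Matrix.transpose_mul, Matrix.mul_assoc]]
    rw [Matrix.trace_mul_comm]
    rw [show Aᵀ * A * Q * (1 - Q)ᵀ = Aᵀ * A * (Q * (1 - Q)ᵀ) from Matrix.mul_assoc _ _ _]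
    have hz : Q * (1 - Q)ᵀ = 0 := by
      rw [Matrix.transpose_sub, Matrix.transpose_one, hs, Matrix.mul_sub, Matrix.mul_one, hi,
        sub_self]
    rw [hz, Matrix.mul_zero, Matrix.trace_zero]
  rw [hcross]; ring

lemma claimA' {p w m r : ℕ} (M : Matrix (Fin p) (Fin w) ℝ) (U : Matrix (Fin m) (Fin w) ℝ)
    (hU : U * Uᵀ = 1) (G : Matrix (Fin p) (Fin m) ℝ) (hG : G = M * Uᵀ)
    (a : Matrix (Fin p) (Fin r) ℝ) (c : Matrix (Fin m) (Fin r) ℝ) :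
    frobSq (M + a * cᵀ * U) = frobSq M - frobSq G + frobSq (G + a * cᵀ) := by
  rw [frobSq_add', frobSq_add']
  have h1 : Matrix.trace (Mᵀ * (a * cᵀ * U)) = Matrix.trace (Gᵀ * (a * cᵀ)) := by
    rw [show Mᵀ * (a * cᵀ * U) = (Mᵀ * (a * cᵀ)) * U by simp only [Matrix.mul_assoc],
      Matrix.trace_mul_comm, hG]
    simp only [Matrix.transpose_mul, Matrix.transpose_transpose, Matrix.mul_assoc]
  have h2 : frobSq (a * cᵀ * U) = frobSq (a * cᵀ) := by
    rw [frobSq_eq_trace', frobSq_eq_trace']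
    rw [show (a * cᵀ * U)ᵀ * (a * cᵀ * U) = Uᵀ * ((a * cᵀ)ᵀ * (a * cᵀ) * U) by
      simp only [Matrix.transpose_mul, Matrix.transpose_transpose, Matrix.mul_assoc]]
    rw [Matrix.trace_mul_comm]
    rw [show (a * cᵀ)ᵀ * (a * cᵀ) * U * Uᵀ = (a * cᵀ)ᵀ * (a * cᵀ) * (U * Uᵀ) from
      Matrix.mul_assoc _ _ _, hU, Matrix.mul_one]
  rw [h1, h2]; ring

lemma frob_mul_proj' {p m : ℕ} (G : Matrix (Fin p) (Fin m) ℝ) (N Q : Matrix (Fin m) (Fin m) ℝ)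
    (hGN : Gᵀ * G = N) (hQs : Qᵀ = Q) (hQi : Q * Q = Q) :
    frobSq (G * Q) = Matrix.trace (N * Q) := by
  rw [frobSq_eq_trace']
  have e : (G * Q)ᵀ * (G * Q) = Q * (N * Q) := by
    rw [Matrix.transpose_mul, hQs, Matrix.mul_assoc, ← Matrix.mul_assoc Gᵀ G Q, hGN]
  rw [e, Matrix.trace_mul_comm, Matrix.mul_assoc, hQi]

lemma lp_bound' {m r : ℕ} (hr : r ≤ m) (lam s : Fin m → ℝ) (hmono : Antitone lam)
    (hlam0 : ∀ i, 0 ≤ lam i) (hs0 : ∀ i, 0 ≤ s i) (hs1 : ∀ i, s i ≤ 1)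
    (hsum : ∑ i, s i ≤ (r : ℝ)) :
    ∑ i, lam i * s i ≤ ∑ i : Fin r, lam (Fin.castLE hr i) := by
  set f : ℕ → ℝ := fun k => if h : k < m then lam ⟨k, h⟩ else 0 with hf
  set t : ℕ → ℝ := fun k => if h : k < m then s ⟨k, h⟩ else 0 with ht
  have hfi : ∀ i : Fin m, f i = lam i := fun i => by simp [hf, i.2]
  have hti : ∀ i : Fin m, t i = s i := fun i => by simp [ht, i.2]
  have hL : ∑ i, lam i * s i = ∑ k ∈ Finset.range m, f k * t k := by
    rw [← Fin.sum_univ_eq_sum_range (fun k => f k * t k) m]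
    exact Finset.sum_congr rfl fun i _ => by rw [hfi, hti]
  have hR : ∑ i : Fin r, lam (Fin.castLE hr i) = ∑ k ∈ Finset.range r, f k := by
    rw [← Fin.sum_univ_eq_sum_range f r]
    refine Finset.sum_congr rfl fun i _ => ?_
    have : ((i : ℕ)) < m := lt_of_lt_of_le i.2 hr
    simp [hf, this, Fin.castLE]
  have ht0 : ∀ k, 0 ≤ t k := by
    intro k; by_cases h : k < m <;> simp [ht, h]; exact hs0 _
  have ht1 : ∀ k, t k ≤ 1 := by
    intro k; by_cases h : k < m <;> simp [ht, h]; exact hs1 _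
  have hf0 : ∀ k, 0 ≤ f k := by
    intro k; by_cases h : k < m <;> simp [hf, h]; exact hlam0 _
  have htsum : ∑ k ∈ Finset.range m, t k ≤ (r : ℝ) := by
    rw [← Fin.sum_univ_eq_sum_range t m] at *
    calc ∑ i : Fin m, t i = ∑ i, s i := Finset.sum_congr rfl fun i _ => hti i
    _ ≤ (r : ℝ) := hsum
  have hsplitf : ∀ g : ℕ → ℝ,
      ∑ k ∈ Finset.range r, g k + ∑ k ∈ Finset.Ico r m, g k = ∑ k ∈ Finset.range m, g k := by
    intro g
    simp only [Finset.range_eq_Ico]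
    exact Finset.sum_Ico_consecutive g (Nat.zero_le r) hr
  have hfIco : ∀ k ∈ Finset.Ico r m, f k ≤ f r := by
    intro k hk
    obtain ⟨h1, h2⟩ := Finset.mem_Ico.mp hk
    have hrm : r < m := lt_of_le_of_lt h1 h2
    simp only [hf, dif_pos h2, dif_pos hrm]
    exact hmono (by exact_mod_cast h1)
  have hfr : ∀ k < r, f r ≤ f k := by
    intro k hk
    have hkm : k < m := lt_of_lt_of_le hk hr
    by_cases hrm : r < m
    · simp only [hf, dif_pos hkm, dif_pos hrm]
      exact hmono (by exact_mod_cast le_of_lt hk)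
    · simp only [hf, dif_pos hkm, dif_neg hrm]
      exact hlam0 _
  rw [hL, hR, ← hsplitf (fun k => f k * t k)]
  have key : ∑ k ∈ Finset.Ico r m, f k * t k ≤ ∑ k ∈ Finset.range r, f k * (1 - t k) := by
    calc ∑ k ∈ Finset.Ico r m, f k * t k
        ≤ ∑ k ∈ Finset.Ico r m, f r * t k := by
          refine Finset.sum_le_sum fun k hk => mul_le_mul_of_nonneg_right (hfIco k hk) (ht0 k)
      _ = f r * ∑ k ∈ Finset.Ico r m, t k := by rw [Finset.mul_sum]
      _ ≤ f r * ((r : ℝ) - ∑ k ∈ Finset.range r, t k) := by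
          refine mul_le_mul_of_nonneg_left ?_ (hf0 r)
          have := hsplitf t
          linarith [htsum]
      _ = ∑ k ∈ Finset.range r, f r * (1 - t k) := by
          rw [show (∑ k ∈ Finset.range r, f r * (1 - t k))
              = ∑ k ∈ Finset.range r, (f r - f r * t k) from
            Finset.sum_congr rfl fun k _ => by ring]
          rw [Finset.sum_sub_distrib, Finset.sum_const, Finset.card_range, ← Finset.mul_sum]
          ring
      _ ≤ ∑ k ∈ Finset.range r, f k * (1 - t k) := by
          refine Finset.sum_le_sum fun k hk => ?_
          exact mul_le_mul_of_nonneg_right (hfr k (Finset.mem_range.mp hk))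
            (by linarith [ht1 k])
  have expand : ∑ k ∈ Finset.range r, f k * (1 - t k)
      = ∑ k ∈ Finset.range r, f k - ∑ k ∈ Finset.range r, f k * t k := by
    rw [← Finset.sum_sub_distrib]; congr 1; ext k; ring
  linarith [key, expand]

lemma euclid_inner' {m : ℕ} (x y : EuclideanSpace ℝ (Fin m)) :
    ⟪x, y⟫ = ∑ i, x i * y i := by
  simp [PiLp.inner_apply, RCLike.inner_apply, mul_comm]

lemma proj_exists' {m r : ℕ} (c : Matrix (Fin m) (Fin r) ℝ) :
    ∃ (d : ℕ) (F : Matrix (Fin d) (Fin m) ℝ), d ≤ r ∧ F * Fᵀ = 1 ∧ cᵀ * (Fᵀ * F) = cᵀ := by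
  classical
  let col : Fin r → EuclideanSpace ℝ (Fin m) := fun k => WithLp.toLp 2 (fun i => c i k : Fin m → ℝ)
  let V : Submodule ℝ (EuclideanSpace ℝ (Fin m)) := Submodule.span ℝ (Set.range col)
  let d := Module.finrank ℝ V
  have hd : d ≤ r := by
    have := finrank_range_le_card (R := ℝ) col
    simpa [Set.finrank, d, V] using this
  let b : OrthonormalBasis (Fin d) ℝ V := stdOrthonormalBasis ℝ V
  let F : Matrix (Fin d) (Fin m) ℝ := fun k i => ((b k : EuclideanSpace ℝ (Fin m)) : Fin m → ℝ) i
  refine ⟨d, F, hd, ?_, ?_⟩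
  · ext k l
    have hob := b.orthonormal
    rw [orthonormal_iff_ite] at hob
    have h2 := hob k l
    rw [Submodule.coe_inner, euclid_inner'] at h2
    rw [Matrix.mul_apply]
    simp only [Matrix.transpose_apply, Matrix.one_apply]
    exact h2
  · have key : ∀ v : V, ∑ l, ⟪(b l : EuclideanSpace ℝ (Fin m)), (v : EuclideanSpace ℝ (Fin m))⟫
        • (b l : EuclideanSpace ℝ (Fin m)) = (v : EuclideanSpace ℝ (Fin m)) := by
      intro v
      have hrep := b.sum_repr' v
      calc ∑ l, ⟪(b l : EuclideanSpace ℝ (Fin m)), (v : EuclideanSpace ℝ (Fin m))⟫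
            • (b l : EuclideanSpace ℝ (Fin m))
          = ∑ l, ((⟪b l, v⟫ • b l : V) : EuclideanSpace ℝ (Fin m)) := by
            refine Finset.sum_congr rfl fun l _ => ?_
            rw [Submodule.coe_inner]
            rfl
        _ = ((∑ l, ⟪b l, v⟫ • b l : V) : EuclideanSpace ℝ (Fin m)) := by
            rw [Submodule.coe_sum]
        _ = (v : EuclideanSpace ℝ (Fin m)) := by rw [hrep]
    ext k i
    have hcol : col k ∈ V := Submodule.subset_span (Set.mem_range_self k)
    have h3 := key ⟨col k, hcol⟩
    have h4 := congrArg (PiLp.proj (𝕜 := ℝ) (p := 2) (β := fun _ : Fin m => ℝ) i) h3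
    simp only [map_sum, _root_.map_smul, smul_eq_mul] at h4
    simp only [Matrix.mul_apply, Matrix.transpose_apply]
    calc ∑ j, c j k * ∑ l, F l j * F l i
        = ∑ l, (∑ j, F l j * c j k) * F l i := by
          simp only [Finset.mul_sum]
          rw [Finset.sum_comm]
          refine Finset.sum_congr rfl fun l _ => ?_
          rw [Finset.sum_mul]
          refine Finset.sum_congr rfl fun j _ => by ring
      _ = c i k := by
          rw [show c i k = PiLp.proj (𝕜 := ℝ) (p := 2) (β := fun _ : Fin m => ℝ) i
              ((⟨col k, hcol⟩ : V) : EuclideanSpace ℝ (Fin m)) from rfl, ← h4]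
          refine Finset.sum_congr rfl fun l _ => ?_
          rw [euclid_inner']
          rfl

lemma kyfan' {m d r : ℕ} (hr : r ≤ m) (hd : d ≤ r)
    (N Vm : Matrix (Fin m) (Fin m) ℝ) (lam' : Fin m → ℝ)
    (hV2 : Vm * Vmᵀ = 1)
    (hspec : N = Vm * diagonal lam' * Vmᵀ)
    (hlam'0 : ∀ j, 0 ≤ lam' j)
    (lam : Fin m → ℝ) (hmono : Antitone lam) (σ : Equiv.Perm (Fin m))
    (hperm : ∀ i, lam i = lam' (σ i))
    (F : Matrix (Fin d) (Fin m) ℝ) (hF : F * Fᵀ = 1) :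
    Matrix.trace (N * (Fᵀ * F)) ≤ ∑ i : Fin r, lam (Fin.castLE hr i) := by
  set B := F * Vm with hB
  set P := Bᵀ * B with hP
  have hBB : B * Bᵀ = 1 := by
    rw [hB, Matrix.transpose_mul]
    rw [show F * Vm * (Vmᵀ * Fᵀ) = F * (Vm * Vmᵀ) * Fᵀ by simp only [Matrix.mul_assoc]]
    rw [hV2, Matrix.mul_one, hF]
  have hPsym : Pᵀ = P := by
    rw [hP, Matrix.transpose_mul, Matrix.transpose_transpose]
  have hPP : P * P = P := by
    rw [hP, show Bᵀ * B * (Bᵀ * B) = Bᵀ * (B * Bᵀ) * B by simp only [Matrix.mul_assoc],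
      hBB, Matrix.mul_one]
  have htr : Matrix.trace (N * (Fᵀ * F)) = ∑ j, lam' j * P j j := by
    have h1 : N * (Fᵀ * F) = Vm * (diagonal lam' * Vmᵀ * (Fᵀ * F)) := by
      rw [hspec]; simp only [Matrix.mul_assoc]
    rw [h1, Matrix.trace_mul_comm]
    have h2 : diagonal lam' * Vmᵀ * (Fᵀ * F) * Vm = diagonal lam' * P := by
      rw [hP, hB]
      simp only [Matrix.transpose_mul, Matrix.mul_assoc]
    rw [h2]
    simp [Matrix.trace, Matrix.diag, Matrix.diagonal_mul]
  have ht0 : ∀ j, 0 ≤ P j j := by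
    intro j
    rw [hP]
    simp only [Matrix.mul_apply, Matrix.transpose_apply]
    exact Finset.sum_nonneg fun k _ => mul_self_nonneg _
  have htsum : ∑ j, P j j = (d : ℝ) := by
    have h : ∑ j, P j j = Matrix.trace P := rfl
    rw [h, hP, Matrix.trace_mul_comm, hBB, Matrix.trace_one]
    simp
  have ht1 : ∀ j, P j j ≤ 1 := by
    intro j
    have hjj : P j j = ∑ k, (P j k) ^ 2 := by
      conv_lhs => rw [← hPP]
      simp only [Matrix.mul_apply]
      refine Finset.sum_congr rfl fun k _ => ?_
      have hkj : P k j = P j k := by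
        have h := congrFun (congrFun hPsym k) j
        simpa [Matrix.transpose_apply] using h.symm
      rw [hkj]; ring
    have hle : (P j j) ^ 2 ≤ ∑ k, (P j k) ^ 2 :=
      Finset.single_le_sum (f := fun k => (P j k) ^ 2) (fun k _ => sq_nonneg _)
        (Finset.mem_univ j)
    nlinarith [ht0 j]
  rw [htr]
  have hre : ∑ j, lam' j * P j j = ∑ i, lam i * P (σ i) (σ i) := by
    rw [← Equiv.sum_comp σ (fun j => lam' j * P j j)]
    exact Finset.sum_congr rfl fun i _ => by rw [hperm i]
  rw [hre]
  refine lp_bound' hr lam (fun i => P (σ i) (σ i)) hmono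
    (fun i => hperm i ▸ hlam'0 (σ i)) (fun i => ht0 _) (fun i => ht1 _) ?_
  rw [Equiv.sum_comp σ (fun j => P j j), htsum]
  exact_mod_cast hd

/-- optimal rank-`r` update: the minimum of `‖M + a bᵀ C‖_F²` over
`a ∈ ℝ^{p×r}`, `b ∈ ℝ^{m×r}` equals `‖M‖_F² − (λ₁ + … + λ_r)`, where the `λᵢ` are the
decreasingly ordered eigenvalues of `N = W^{-1/2} C Mᵀ M Cᵀ W^{-1/2}`, `W = CCᵀ`. -/
theorem stmt_12 (p w m r : ℕ) (hr : r ≤ m)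
    (M : Matrix (Fin p) (Fin w) ℝ) (C : Matrix (Fin m) (Fin w) ℝ)
    (hrank : C.rank = m)
    (hW : (C * Cᵀ).PosDef)
    (N : Matrix (Fin m) (Fin m) ℝ)
    (hNdef : N = (psdSqrt hW.posSemidef)⁻¹ * (C * Mᵀ * M * Cᵀ) * (psdSqrt hW.posSemidef)⁻¹)
    (hN : N.IsHermitian)
    (lam : Fin m → ℝ) (hmono : Antitone lam)
    (hperm : ∃ σ : Equiv.Perm (Fin m), ∀ i, lam i = hN.eigenvalues (σ i)) :
    IsLeast {x : ℝ | ∃ (a : Matrix (Fin p) (Fin r) ℝ) (b : Matrix (Fin m) (Fin r) ℝ),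
        x = frobSq (M + a * bᵀ * C)}
      (frobSq M - ∑ i : Fin r, lam (Fin.castLE hr i)) := by
  obtain ⟨σ, hperm⟩ := hperm
  set S := psdSqrt hW.posSemidef with hSdef
  have hSS : S * S = C * Cᵀ := psdSqrt_mul_self' hW.posSemidef
  have hSherm : S.IsHermitian :=
    (Matrix.conjTranspose_eq_transpose_of_trivial S).trans (psdSqrt_transpose' hW.posSemidef)
  have hSsym : Sᵀ = S := by rw [← Matrix.conjTranspose_eq_transpose_of_trivial]; exact hSherm
  have hdet : IsUnit S.det := by
    have h1 : S.det * S.det = (C * Cᵀ).det := by rw [← Matrix.det_mul, hSS]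
    have h2 : 0 < (C * Cᵀ).det := hW.det_pos
    have h3 : S.det ≠ 0 := by
      intro h
      rw [h, mul_zero] at h1
      exact h2.ne' h1.symm
    exact h3.isUnit
  have hS1 : S⁻¹ * S = 1 := Matrix.nonsing_inv_mul S hdet
  have hS2 : S * S⁻¹ = 1 := Matrix.mul_nonsing_inv S hdet
  have hSinvT : (S⁻¹)ᵀ = S⁻¹ := by rw [Matrix.transpose_nonsing_inv, hSsym]
  set U : Matrix (Fin m) (Fin w) ℝ := S⁻¹ * C with hU
  have hUU : U * Uᵀ = 1 := by
    have h0 : U * Uᵀ = S⁻¹ * ((C * Cᵀ) * S⁻¹) := by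
      rw [hU, Matrix.transpose_mul, hSinvT]; simp only [Matrix.mul_assoc]
    rw [h0, ← hSS]
    calc S⁻¹ * (S * S * S⁻¹) = S⁻¹ * (S * (S * S⁻¹)) := by simp only [Matrix.mul_assoc]
      _ = 1 := by rw [hS2, Matrix.mul_one, hS1]
  set G : Matrix (Fin p) (Fin m) ℝ := M * Uᵀ with hG
  have hGN : Gᵀ * G = N := by
    rw [hG, Matrix.transpose_mul, Matrix.transpose_transpose, hNdef, hU, Matrix.transpose_mul,
      hSinvT]
    simp only [Matrix.mul_assoc]
  have hNpsd : N.PosSemidef := by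
    have h := Matrix.posSemidef_conjTranspose_mul_self (M * Cᵀ * S⁻¹)
    rw [Matrix.conjTranspose_eq_transpose_of_trivial] at h
    convert h using 1
    rw [hNdef]
    rw [Matrix.transpose_mul, Matrix.transpose_mul, hSinvT, Matrix.transpose_transpose]
    simp only [Matrix.mul_assoc]
  have hlam'0 : ∀ j, 0 ≤ hN.eigenvalues j := fun j => hNpsd.eigenvalues_nonneg j
  set Vm : Matrix (Fin m) (Fin m) ℝ := (hN.eigenvectorUnitary : Matrix (Fin m) (Fin m) ℝ)
    with hVm
  have hco : (RCLike.ofReal ∘ hN.eigenvalues : Fin m → ℝ) = hN.eigenvalues := by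
    funext j; simp [RCLike.ofReal_real_eq_id]
  have hspec : N = Vm * diagonal hN.eigenvalues * Vmᵀ := by
    have h := hN.spectral_theorem
    rw [Unitary.conjStarAlgAut_apply, Matrix.star_eq_conjTranspose, Matrix.conjTranspose_eq_transpose_of_trivial, hco] at h
    exact h
  have hV1 : Vmᵀ * Vm = 1 := by
    have h := (Matrix.mem_unitaryGroup_iff').mp hN.eigenvectorUnitary.2
    rw [Matrix.star_eq_conjTranspose, Matrix.conjTranspose_eq_transpose_of_trivial] at h
    exact h
  have hV2 : Vm * Vmᵀ = 1 := by
    have h := (Matrix.mem_unitaryGroup_iff).mp hN.eigenvectorUnitary.2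
    rw [Matrix.star_eq_conjTranspose, Matrix.conjTranspose_eq_transpose_of_trivial] at h
    exact h
  constructor
  · -- membership: the optimum is attained
    set cm : Matrix (Fin m) (Fin r) ℝ := fun i k => Vm i (σ (Fin.castLE hr k)) with hcm
    refine ⟨-(G * cm), S⁻¹ * cm, ?_⟩
    have habc : -(G * cm) * (S⁻¹ * cm)ᵀ * C = -(G * cm) * cmᵀ * U := by
      rw [Matrix.transpose_mul, hSinvT, hU]
      simp only [Matrix.mul_assoc]
    rw [habc, claimA' M U hUU G hG (-(G * cm)) cm]
    have hinj : Function.Injective (fun k : Fin r => σ (Fin.castLE hr k)) :=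
      σ.injective.comp (Fin.castLE_injective hr)
    have hcc : cmᵀ * cm = 1 := by
      ext k l
      have h := congrFun (congrFun hV1 (σ (Fin.castLE hr k))) (σ (Fin.castLE hr l))
      simp only [Matrix.mul_apply, Matrix.transpose_apply, Matrix.one_apply] at h ⊢
      rw [hcm]
      simp only []
      rw [h]
      by_cases hkl : k = l
      · simp [hkl]
      · have : σ (Fin.castLE hr k) ≠ σ (Fin.castLE hr l) := fun hc => hkl (hinj hc)
        simp [hkl, this]
    have hNV : N * Vm = Vm * diagonal hN.eigenvalues := by
      conv_lhs => rw [hspec]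
      rw [Matrix.mul_assoc, hV1, Matrix.mul_one]
    have hNc : N * cm = cm * diagonal (fun k : Fin r => lam (Fin.castLE hr k)) := by
      ext i k
      rw [Matrix.mul_diagonal]
      calc (N * cm) i k = (N * Vm) i (σ (Fin.castLE hr k)) := rfl
        _ = (Vm * diagonal hN.eigenvalues) i (σ (Fin.castLE hr k)) := by rw [hNV]
        _ = Vm i (σ (Fin.castLE hr k)) * hN.eigenvalues (σ (Fin.castLE hr k)) := by
            rw [Matrix.mul_diagonal]
        _ = cm i k * lam (Fin.castLE hr k) := by rw [← hperm]
    set Q : Matrix (Fin m) (Fin m) ℝ := cm * cmᵀ with hQ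
    have hQsym : Qᵀ = Q := by rw [hQ, Matrix.transpose_mul, Matrix.transpose_transpose]
    have hQidem : Q * Q = Q := by
      rw [hQ, show cm * cmᵀ * (cm * cmᵀ) = cm * (cmᵀ * cm) * cmᵀ by simp only [Matrix.mul_assoc],
        hcc, Matrix.mul_one]
    have htrNQ : Matrix.trace (N * Q) = ∑ k : Fin r, lam (Fin.castLE hr k) := by
      rw [hQ, ← Matrix.mul_assoc, hNc, Matrix.mul_assoc, Matrix.trace_mul_comm,
        Matrix.mul_assoc, hcc, Matrix.mul_one, Matrix.trace_diagonal]
    have hrw : -(G * cm) * cmᵀ = -(G * Q) := by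
      rw [hQ]
      simp only [Matrix.neg_mul, Matrix.mul_assoc]
    rw [hrw]
    have hfneg : frobSq (G + -(G * Q)) = frobSq G - Matrix.trace (N * Q) := by
      rw [frobSq_add']
      have hB1 : Matrix.trace (Gᵀ * -(G * Q)) = - Matrix.trace (N * Q) := by
        rw [Matrix.mul_neg, Matrix.trace_neg, ← Matrix.mul_assoc, hGN]
      have hB2 : frobSq (-(G * Q)) = Matrix.trace (N * Q) := by
        have : frobSq (-(G * Q)) = frobSq (G * Q) := by simp [frobSq]
        rw [this, frob_mul_proj' G N Q hGN hQsym hQidem]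
      rw [hB1, hB2]; ring
    rw [hfneg, htrNQ]
    ring
  · -- lower bound
    rintro x ⟨a, b, rfl⟩
    set c : Matrix (Fin m) (Fin r) ℝ := S * b with hc
    have habc : a * bᵀ * C = a * cᵀ * U := by
      rw [hc, Matrix.transpose_mul, hSsym, hU]
      simp only [Matrix.mul_assoc]
      rw [show S * (S⁻¹ * C) = C by rw [← Matrix.mul_assoc, hS2, Matrix.one_mul]]
    rw [habc, claimA' M U hUU G hG a c]
    obtain ⟨d, F, hd, hF, hcF⟩ := proj_exists' c
    set Q : Matrix (Fin m) (Fin m) ℝ := Fᵀ * F with hQ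
    have hQsym : Qᵀ = Q := by rw [hQ, Matrix.transpose_mul, Matrix.transpose_transpose]
    have hQidem : Q * Q = Q := by
      rw [hQ, show Fᵀ * F * (Fᵀ * F) = Fᵀ * (F * Fᵀ) * F by simp only [Matrix.mul_assoc],
        hF, Matrix.mul_one]
    have hkey : (G + a * cᵀ) * (1 - Q) = G * (1 - Q) := by
      rw [Matrix.add_mul]
      have hz : a * cᵀ * (1 - Q) = 0 := by
        rw [show a * cᵀ * (1 - Q) = a * (cᵀ * (1 - Q)) from Matrix.mul_assoc _ _ _]
        rw [Matrix.mul_sub, Matrix.mul_one, hQ, hcF, sub_self, Matrix.mul_zero]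
      rw [hz, add_zero]
    have h1 := frobSq_split' (G + a * cᵀ) Q hQsym hQidem
    have h2 := frobSq_split' G Q hQsym hQidem
    have h3 : frobSq (G * Q) = Matrix.trace (N * Q) := frob_mul_proj' G N Q hGN hQsym hQidem
    have h4 : Matrix.trace (N * Q) ≤ ∑ i : Fin r, lam (Fin.castLE hr i) :=
      kyfan' hr hd N Vm hN.eigenvalues hV2 hspec hlam'0 lam hmono σ hperm F hF
    have h5 : frobSq (G * (1 - Q)) ≤ frobSq (G + a * cᵀ) := by
      rw [← hkey]
      have := frobSq_nonneg' ((G + a * cᵀ) * Q)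
      linarith [h1]
    have h6 : frobSq (G * (1 - Q)) = frobSq G - Matrix.trace (N * Q) := by
      rw [← h3]; linarith [h2]
    linarith [h4, h5, h6]
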